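/- Let c ∈ (1,2) and ε ∈ (0, min{1/4, 2−c}). There exists C > 0 such that for all real t ≥ (c·2^c)^{1/ε} and all (ξ₁,ξ₂) ∈ ℝ² with |ξ₂| ≤ t^{ε−c} and |ξ₁| > t^{2ε−1}, we have |(1/t)∫_0^t e^{-2πi(ξ₂s^c + ξ₁s)} ds| ≤ C·t^{-ε/4}. -/

import Mathlib

open MeasureTheory intervalIntegral

lemma vdc (a b lam : ℝ) (hab : a ≤ b) (hlam : 0 < lam)
    (φ φ' φ'' : ℝ → ℝ)
    (hφ : ∀ s ∈ Set.Icc a b, HasDerivAt φ (φ' s) s)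
    (hφ' : ∀ s ∈ Set.Icc a b, HasDerivAt φ' (φ'' s) s)
    (hφ''c : ContinuousOn φ'' (Set.Icc a b))
    (hlow : ∀ s ∈ Set.Icc a b, lam ≤ |φ' s|)
    (hsign : (∀ s ∈ Set.Icc a b, 0 ≤ φ'' s) ∨ (∀ s ∈ Set.Icc a b, φ'' s ≤ 0)) :
    ‖∫ s in a..b, Complex.exp (Complex.I * φ s)‖ ≤ 4 / lam := by
  have huIcc : Set.uIcc a b = Set.Icc a b := Set.uIcc_of_le hab
  have hne : ∀ s ∈ Set.Icc a b, φ' s ≠ 0 := by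
    intro s hs
    have := hlam.trans_le (hlow s hs)
    exact fun h => by simp [h] at this
  set u : ℝ → ℂ := fun s => 1 / (Complex.I * φ' s) with hu_def
  set u' : ℝ → ℂ := fun s => Complex.I * φ'' s / (φ' s : ℂ) ^ 2 with hu'_def
  set v : ℝ → ℂ := fun s => Complex.exp (Complex.I * φ s) with hv_def
  set v' : ℝ → ℂ := fun s => Complex.I * φ' s * Complex.exp (Complex.I * φ s) with hv'_def
  -- derivatives
  have hu : ∀ s ∈ Set.uIcc a b, HasDerivAt u (u' s) s := by
    intro s hs
    rw [huIcc] at hs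
    have h1 : HasDerivAt (fun s : ℝ => Complex.I * (φ' s : ℂ)) (Complex.I * φ'' s) s :=
      ((hφ' s hs).ofReal_comp).const_mul Complex.I
    have hne' : Complex.I * (φ' s : ℂ) ≠ 0 := by
      simp [Complex.I_ne_zero, Complex.ofReal_ne_zero, hne s hs]
    have h2 : HasDerivAt u ((0 * (Complex.I * (φ' s : ℂ)) - 1 * (Complex.I * (φ'' s : ℂ))) /
        (Complex.I * (φ' s : ℂ)) ^ 2) s :=
      (hasDerivAt_const s (1 : ℂ)).div h1 hne'
    convert h2 using 1
    have h3 : ((φ' s : ℂ)) ≠ 0 := Complex.ofReal_ne_zero.2 (hne s hs)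
    simp only [hu'_def]
    rw [mul_pow, Complex.I_sq]
    field_simp
    ring
  have hv : ∀ s ∈ Set.uIcc a b, HasDerivAt v (v' s) s := by
    intro s hs
    rw [huIcc] at hs
    have h1 : HasDerivAt (fun s : ℝ => Complex.I * (φ s : ℂ)) (Complex.I * φ' s) s :=
      ((hφ s hs).ofReal_comp).const_mul Complex.I
    have := h1.cexp
    convert this using 1
    ring
  -- continuity facts
  have hφc : ContinuousOn φ (Set.Icc a b) := fun s hs => (hφ s hs).continuousAt.continuousWithinAt
  have hφ'c : ContinuousOn φ' (Set.Icc a b) := fun s hs => (hφ' s hs).continuousAt.continuousWithinAt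
  have hvc : ContinuousOn v (Set.Icc a b) := by
    apply Complex.continuous_exp.comp_continuousOn
    exact (continuous_const.continuousOn.mul (Complex.continuous_ofReal.comp_continuousOn hφc))
  have hu'c : ContinuousOn u' (Set.Icc a b) := by
    apply ContinuousOn.div
    · exact continuous_const.continuousOn.mul (Complex.continuous_ofReal.comp_continuousOn hφ''c)
    · exact (Complex.continuous_ofReal.comp_continuousOn hφ'c).pow 2
    · intro s hs
      simpa using pow_ne_zero 2 (Complex.ofReal_ne_zero.2 (hne s hs))
  have hv'c : ContinuousOn v' (Set.Icc a b) :=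
    (continuous_const.continuousOn.mul (Complex.continuous_ofReal.comp_continuousOn hφ'c)).mul hvc
  have hu'int : IntervalIntegrable u' volume a b := by
    apply ContinuousOn.intervalIntegrable; rwa [huIcc]
  have hv'int : IntervalIntegrable v' volume a b := by
    apply ContinuousOn.intervalIntegrable; rwa [huIcc]
  have key := intervalIntegral.integral_mul_deriv_eq_deriv_mul hu hv hu'int hv'int
  have heq : ∫ s in a..b, Complex.exp (Complex.I * φ s) = ∫ s in a..b, u s * v' s := by
    apply intervalIntegral.integral_congr
    intro s hs
    rw [huIcc] at hs
    have h3 : Complex.I * (φ' s : ℂ) ≠ 0 := by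
      simp [Complex.I_ne_zero, Complex.ofReal_ne_zero, hne s hs]
    simp only [hu_def, hv'_def]
    field_simp
    rw [div_self (Complex.ofReal_ne_zero.2 (hne s hs))]
  -- norms
  have hnv : ∀ s : ℝ, ‖v s‖ = 1 := by
    intro s
    simp [hv_def, Complex.norm_exp]
  have hnu : ∀ s ∈ Set.Icc a b, ‖u s‖ ≤ 1 / lam := by
    intro s hs
    have : ‖u s‖ = 1 / |φ' s| := by
      simp [hu_def, map_mul, Complex.norm_I, Complex.norm_real, one_div]
    rw [this]
    exact one_div_le_one_div_of_le hlam (hlow s hs)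
  -- the real integral of |φ''|/φ'^2
  have hf : ∀ s ∈ Set.uIcc a b, HasDerivAt (fun s => -(φ' s)⁻¹) (φ'' s / (φ' s) ^ 2) s := by
    intro s hs
    rw [huIcc] at hs
    have := ((hφ' s hs).inv (hne s hs)).neg
    exact this.congr_deriv (by ring)
  have hintc : ContinuousOn (fun s => φ'' s / (φ' s) ^ 2) (Set.Icc a b) := by
    apply hφ''c.div (hφ'c.pow 2)
    intro s hs
    exact pow_ne_zero 2 (hne s hs)
  have hintint : IntervalIntegrable (fun s => φ'' s / (φ' s) ^ 2) volume a b := by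
    apply ContinuousOn.intervalIntegrable; rwa [huIcc]
  have hftc : ∫ s in a..b, φ'' s / (φ' s) ^ 2 = -(φ' b)⁻¹ - -(φ' a)⁻¹ :=
    intervalIntegral.integral_eq_sub_of_hasDerivAt hf hintint
  have hbnd : ∀ s ∈ Set.Icc a b, |(φ' s)⁻¹| ≤ 1 / lam := by
    intro s hs
    rw [abs_inv, one_div]
    exact inv_anti₀ hlam (hlow s hs)
  -- bound on ∫ ‖u' v‖
  have hnorm_u'v : ∀ s ∈ Set.Icc a b, ‖u' s * v s‖ = |φ'' s| / (φ' s) ^ 2 := by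
    intro s hs
    rw [norm_mul, hnv]
    simp [hu'_def, map_div₀, map_mul, Complex.norm_I, Complex.norm_real,
      map_pow, sq_abs]
  have hintnorm : ∫ s in a..b, ‖u' s * v s‖ ≤ 2 / lam := by
    have hcont : ContinuousOn (fun s => ‖u' s * v s‖) (Set.Icc a b) := ((hu'c.mul hvc)).norm
    have hib : |(-(φ' b)⁻¹ - -(φ' a)⁻¹)| ≤ 2 / lam := by
      have h1 := hbnd a ⟨le_refl a, hab⟩
      have h2 := hbnd b ⟨hab, le_refl b⟩
      calc |(-(φ' b)⁻¹ - -(φ' a)⁻¹)| ≤ |(-(φ' b)⁻¹)| + |(-(φ' a)⁻¹)| := abs_sub _ _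
        _ = |(φ' b)⁻¹| + |(φ' a)⁻¹| := by rw [abs_neg, abs_neg]
        _ ≤ 1 / lam + 1 / lam := add_le_add h2 h1
        _ = 2 / lam := by ring
    rcases hsign with hpos | hneg
    · have : ∫ s in a..b, ‖u' s * v s‖ = ∫ s in a..b, φ'' s / (φ' s) ^ 2 := by
        apply intervalIntegral.integral_congr
        intro s hs
        rw [huIcc] at hs
        dsimp only
        rw [hnorm_u'v s hs, abs_of_nonneg (hpos s hs)]
      rw [this, hftc]
      exact (le_abs_self _).trans hib
    · have : ∫ s in a..b, ‖u' s * v s‖ = ∫ s in a..b, -(φ'' s / (φ' s) ^ 2) := by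
        apply intervalIntegral.integral_congr
        intro s hs
        rw [huIcc] at hs
        dsimp only
        rw [hnorm_u'v s hs, abs_of_nonpos (hneg s hs)]
        ring
      rw [this, intervalIntegral.integral_neg, hftc]
      exact (neg_le_abs _).trans hib
  have hintuv : ‖∫ s in a..b, u' s * v s‖ ≤ 2 / lam := by
    refine le_trans ?_ hintnorm
    exact intervalIntegral.norm_integral_le_integral_norm hab
  -- assemble
  rw [heq, key]
  have hub : ‖u b * v b‖ ≤ 1 / lam := by
    rw [norm_mul, hnv, mul_one]; exact hnu b ⟨hab, le_refl b⟩
  have hua : ‖u a * v a‖ ≤ 1 / lam := by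
    rw [norm_mul, hnv, mul_one]; exact hnu a ⟨le_refl a, hab⟩
  calc ‖u b * v b - u a * v a - ∫ s in a..b, u' s * v s‖
      ≤ ‖u b * v b - u a * v a‖ + ‖∫ s in a..b, u' s * v s‖ := norm_sub_le _ _
    _ ≤ (‖u b * v b‖ + ‖u a * v a‖) + ‖∫ s in a..b, u' s * v s‖ := by
        gcongr; exact norm_sub_le _ _
    _ ≤ (1 / lam + 1 / lam) + 2 / lam := by gcongr
    _ = 4 / lam := by ring

/-- `e x = e^{2πix}` -/
noncomputable def e (x : ℝ) : ℂ := Complex.exp (2 * Real.pi * Complex.I * x)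

set_option maxHeartbeats 1000000 in
theorem stmt8 (c ε : ℝ) (hc1 : 1 < c) (hc2 : c < 2)
    (hε1 : 0 < ε) (hε2 : ε < min (1/4) (2 - c)) :
    ∃ C > (0 : ℝ), ∀ (t : ℝ), (c * (2 : ℝ) ^ c) ^ (1 / ε) ≤ t → ∀ (ξ₁ ξ₂ : ℝ),
      |ξ₂| ≤ t ^ (ε - c) → t ^ (2 * ε - 1) < |ξ₁| →
      ‖((t : ℂ))⁻¹ * ∫ s in (0 : ℝ)..t, e (-(ξ₂ * s ^ c + ξ₁ * s))‖ ≤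
        C * t ^ (-(ε / 4)) := by
  have hε14 : ε < 1/4 := lt_of_lt_of_le hε2 (min_le_left _ _)
  have hπ := Real.pi_pos
  refine ⟨3, by norm_num, ?_⟩
  intro t hT ξ₁ ξ₂ hξ₂ hξ₁
  -- basic facts about t
  have h2c1 : (1:ℝ) < 2 ^ c :=
    (Real.one_lt_rpow_iff_of_pos (by norm_num)).2 (Or.inl ⟨by norm_num, by linarith⟩)
  have hc2c : (1:ℝ) < c * 2 ^ c := by nlinarith
  have ht1 : 1 < t := by
    refine lt_of_lt_of_le ?_ hT
    exact (Real.one_lt_rpow_iff_of_pos (by linarith)).2 (Or.inl ⟨hc2c, by positivity⟩)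
  have ht0 : 0 < t := by linarith
  have htε : c * 2 ^ c ≤ t ^ ε := by
    have h := Real.rpow_le_rpow (by positivity) hT (le_of_lt hε1)
    rwa [← Real.rpow_mul (by positivity : (0:ℝ) ≤ c * 2 ^ c), one_div,
      inv_mul_cancel₀ hε1.ne', Real.rpow_one] at h
  have h2c2 : (2:ℝ) ≤ 2 ^ c := by
    calc (2:ℝ) = 2 ^ (1:ℝ) := (Real.rpow_one 2).symm
      _ ≤ 2 ^ c := Real.rpow_le_rpow_of_exponent_le (by norm_num) (le_of_lt hc1)
  have h2cle : 2 * c ≤ t ^ ε := le_trans (by nlinarith) htε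
  -- phase functions
  set φ : ℝ → ℝ := fun s => -(2 * Real.pi) * (ξ₂ * s ^ c + ξ₁ * s) with hφ_def
  set φ' : ℝ → ℝ := fun s => -(2 * Real.pi) * (c * ξ₂ * s ^ (c - 1) + ξ₁) with hφ'_def
  set φ'' : ℝ → ℝ := fun s => -(2 * Real.pi) * (c * (c - 1) * ξ₂ * s ^ (c - 2)) with hφ''_def
  have hφ : ∀ s ∈ Set.Icc (1:ℝ) t, HasDerivAt φ (φ' s) s := by
    intro s hs
    have hs0 : s ≠ 0 := by have := hs.1; intro h; rw [h] at this; linarith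
    have h1 := (Real.hasDerivAt_rpow_const (p := c) (Or.inl hs0)).const_mul ξ₂
    have h2 := (hasDerivAt_id s).const_mul ξ₁
    have h3 := (h1.add h2).const_mul (-(2 * Real.pi))
    exact h3.congr_deriv (by simp only [hφ'_def, id]; ring)
  have hφ' : ∀ s ∈ Set.Icc (1:ℝ) t, HasDerivAt φ' (φ'' s) s := by
    intro s hs
    have hs0 : s ≠ 0 := by have := hs.1; intro h; rw [h] at this; linarith
    have h1 := (Real.hasDerivAt_rpow_const (p := c - 1) (Or.inl hs0)).const_mul (c * ξ₂)
    have h2 := (h1.add_const ξ₁).const_mul (-(2 * Real.pi))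
    exact h2.congr_deriv (by simp only [hφ''_def]; rw [show c - 1 - 1 = c - 2 by ring]; ring)
  have hφ''c : ContinuousOn φ'' (Set.Icc (1:ℝ) t) := by
    intro s hs
    have hs0 : s ≠ 0 := by have := hs.1; intro h; rw [h] at this; linarith
    apply ContinuousAt.continuousWithinAt
    have h1 : ContinuousAt (fun s : ℝ => s ^ (c - 2)) s :=
      Real.continuousAt_rpow_const s (c - 2) (Or.inl hs0)
    exact continuousAt_const.mul (continuousAt_const.mul h1)
  set lam : ℝ := Real.pi * t ^ (2 * ε - 1) with hlam_def
  have hlam : 0 < lam := by positivity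
  have hlow : ∀ s ∈ Set.Icc (1:ℝ) t, lam ≤ |φ' s| := by
    intro s hs
    obtain ⟨hs1, hst⟩ := hs
    have hs0 : (0:ℝ) < s := by linarith
    have hkey : c * |ξ₂| * s ^ (c - 1) ≤ t ^ (2 * ε - 1) / 2 := by
      have e1 : s ^ (c - 1) ≤ t ^ (c - 1) :=
        Real.rpow_le_rpow (le_of_lt hs0) hst (by linarith)
      calc c * |ξ₂| * s ^ (c - 1) ≤ c * t ^ (ε - c) * t ^ (c - 1) := by
            apply mul_le_mul (mul_le_mul_of_nonneg_left hξ₂ (by linarith)) e1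
              (Real.rpow_nonneg (le_of_lt hs0) _) (by positivity)
        _ = c * t ^ (ε - 1) := by
            rw [mul_assoc, ← Real.rpow_add ht0, show ε - c + (c - 1) = ε - 1 by ring]
        _ ≤ (t ^ ε / 2) * t ^ (ε - 1) := by
            apply mul_le_mul_of_nonneg_right (by linarith)
              (Real.rpow_nonneg (le_of_lt ht0) _)
        _ = t ^ (2 * ε - 1) / 2 := by
            rw [div_mul_eq_mul_div, ← Real.rpow_add ht0, show ε + (ε - 1) = 2 * ε - 1 by ring]
    have habs1 : |c * ξ₂ * s ^ (c - 1)| = c * |ξ₂| * s ^ (c - 1) := by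
      rw [abs_mul, abs_mul, abs_of_nonneg (by linarith : (0:ℝ) ≤ c),
        abs_of_nonneg (Real.rpow_nonneg (le_of_lt hs0) _)]
    have habs2 : |c * ξ₂ * s ^ (c - 1)| ≤ |ξ₁| / 2 := by
      rw [habs1]; linarith
    have htri : |ξ₁| - |c * ξ₂ * s ^ (c - 1)| ≤ |c * ξ₂ * s ^ (c - 1) + ξ₁| := by
      have h := abs_sub_abs_le_abs_sub ξ₁ (-(c * ξ₂ * s ^ (c - 1)))
      rw [abs_neg, sub_neg_eq_add, add_comm] at h
      exact h
    have hX : |ξ₁| / 2 ≤ |c * ξ₂ * s ^ (c - 1) + ξ₁| := by linarith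
    have hφ'abs : |φ' s| = 2 * Real.pi * |c * ξ₂ * s ^ (c - 1) + ξ₁| := by
      simp only [hφ'_def]
      rw [abs_mul, abs_neg, abs_of_pos (by linarith : (0:ℝ) < 2 * Real.pi)]
    rw [hφ'abs, hlam_def]
    nlinarith [hξ₁, hπ]
  have hsign : (∀ s ∈ Set.Icc (1:ℝ) t, 0 ≤ φ'' s) ∨ (∀ s ∈ Set.Icc (1:ℝ) t, φ'' s ≤ 0) := by
    rcases le_or_gt 0 ξ₂ with hξ | hξ
    · right
      intro s hs
      have h1 : 0 ≤ c * (c - 1) * ξ₂ * s ^ (c - 2) :=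
        mul_nonneg (mul_nonneg (mul_nonneg (by linarith) (by linarith)) hξ)
          (Real.rpow_nonneg (by linarith [hs.1]) _)
      simp only [hφ''_def]
      nlinarith [hπ]
    · left
      intro s hs
      have hr : (0:ℝ) ≤ s ^ (c - 2) := Real.rpow_nonneg (by linarith [hs.1]) _
      have h1 : (0:ℝ) ≤ c * (c - 1) * (-ξ₂) * s ^ (c - 2) :=
        mul_nonneg (mul_nonneg (mul_nonneg (by linarith) (by linarith)) (by linarith)) hr
      simp only [hφ''_def]
      nlinarith [hπ]
  have hvdc := vdc 1 t lam (le_of_lt ht1) hlam φ φ' φ'' hφ hφ' hφ''c hlow hsign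
  have hfun : ∀ s : ℝ, e (-(ξ₂ * s ^ c + ξ₁ * s)) = Complex.exp (Complex.I * φ s) := by
    intro s
    simp only [e, hφ_def]
    congr 1
    push_cast
    ring
  have hcontin : Continuous fun s : ℝ => e (-(ξ₂ * s ^ c + ξ₁ * s)) := by
    have hx : Continuous fun s : ℝ => -(ξ₂ * s ^ c + ξ₁ * s) := by
      apply Continuous.neg
      exact (continuous_const.mul
        (Real.continuous_rpow_const (le_of_lt (by linarith : (0:ℝ) < c)))).add
        (continuous_const.mul continuous_id)
    simp only [e]
    exact Complex.continuous_exp.comp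
      (Continuous.mul continuous_const (Complex.continuous_ofReal.comp hx))
  have hi1 : IntervalIntegrable (fun s : ℝ => e (-(ξ₂ * s ^ c + ξ₁ * s))) volume 0 1 :=
    hcontin.intervalIntegrable _ _
  have hi2 : IntervalIntegrable (fun s : ℝ => e (-(ξ₂ * s ^ c + ξ₁ * s))) volume 1 t :=
    hcontin.intervalIntegrable _ _
  have hnorm_e : ∀ x : ℝ, ‖e x‖ = 1 := by
    intro x
    simp [e, Complex.norm_exp]
  have h01 : ‖∫ s in (0:ℝ)..1, e (-(ξ₂ * s ^ c + ξ₁ * s))‖ ≤ 1 := by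
    have := intervalIntegral.norm_integral_le_of_norm_le_const
      (C := 1) (f := fun s : ℝ => e (-(ξ₂ * s ^ c + ξ₁ * s))) (a := 0) (b := 1)
      (fun x _ => le_of_eq (hnorm_e _))
    simpa using this
  have h1t : ‖∫ s in (1:ℝ)..t, e (-(ξ₂ * s ^ c + ξ₁ * s))‖ ≤ 4 / lam := by
    calc ‖∫ s in (1:ℝ)..t, e (-(ξ₂ * s ^ c + ξ₁ * s))‖
        = ‖∫ s in (1:ℝ)..t, Complex.exp (Complex.I * φ s)‖ := by
          congr 1
          apply intervalIntegral.integral_congr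
          intro s _
          exact hfun s
      _ ≤ 4 / lam := hvdc
  have hsplit : (∫ s in (0:ℝ)..t, e (-(ξ₂ * s ^ c + ξ₁ * s))) =
      (∫ s in (0:ℝ)..1, e (-(ξ₂ * s ^ c + ξ₁ * s))) +
      ∫ s in (1:ℝ)..t, e (-(ξ₂ * s ^ c + ξ₁ * s)) :=
    (intervalIntegral.integral_add_adjacent_intervals hi1 hi2).symm
  have hsum : ‖∫ s in (0:ℝ)..t, e (-(ξ₂ * s ^ c + ξ₁ * s))‖ ≤ 1 + 4 / lam := by
    rw [hsplit]
    exact (norm_add_le _ _).trans (add_le_add h01 h1t)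
  have hnt : ‖((t:ℂ))⁻¹‖ = t⁻¹ := by
    rw [norm_inv]
    simp [Complex.norm_real, abs_of_pos ht0]
  rw [norm_mul, hnt]
  have hle1 : t⁻¹ * 1 ≤ t ^ (-(ε/4)) := by
    rw [mul_one, ← Real.rpow_neg_one t]
    exact Real.rpow_le_rpow_of_exponent_le (le_of_lt ht1) (by linarith)
  have hA : t⁻¹ * (4 / lam) = (4 / Real.pi) * t ^ (-(2*ε)) := by
    rw [hlam_def, show (-(2*ε)) = (-1) + (-(2*ε-1)) by ring, Real.rpow_add ht0,
      Real.rpow_neg_one, Real.rpow_neg (le_of_lt ht0)]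
    have hne1 : Real.pi ≠ 0 := ne_of_gt hπ
    have hne2 : t ^ (2*ε-1) ≠ 0 := ne_of_gt (Real.rpow_pos_of_pos ht0 _)
    field_simp
  have hB : t ^ (-(2*ε)) ≤ t ^ (-(ε/4)) :=
    Real.rpow_le_rpow_of_exponent_le (le_of_lt ht1) (by linarith)
  have hC : 4 / Real.pi ≤ 2 := by
    rw [div_le_iff₀ hπ]
    nlinarith [Real.pi_gt_three]
  have hle2 : t⁻¹ * (4 / lam) ≤ 2 * t ^ (-(ε/4)) := by
    rw [hA]
    exact mul_le_mul hC hB (Real.rpow_nonneg (le_of_lt ht0) _) (by norm_num)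
  calc t⁻¹ * ‖∫ s in (0:ℝ)..t, e (-(ξ₂ * s ^ c + ξ₁ * s))‖
      ≤ t⁻¹ * (1 + 4 / lam) :=
        mul_le_mul_of_nonneg_left hsum (inv_nonneg.2 (le_of_lt ht0))
    _ = t⁻¹ * 1 + t⁻¹ * (4 / lam) := by ring
    _ ≤ t ^ (-(ε/4)) + 2 * t ^ (-(ε/4)) := add_le_add hle1 hle2
    _ = 3 * t ^ (-(ε/4)) := by ring
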